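/- Let A be a unital commutative associative algebra, B a vertex A-algebroid, g an automorphism of B of order T, and let M = ⊕_{n ∈ (1/T)ℕ} M(n) be a (1/T)ℕ-graded g-twisted module for the associated vertex algebra V_B. Then the degree-zero subspace M(0) is a module for the Lie A⁰-algebroid B⁰/A⁰∂A⁰ via a·w = a_{-1}w for a ∈ A⁰ and b·w = b₀w for b ∈ B⁰, where A⁰ and B⁰ are the g-fixed points. -/
import Mathlib


noncomputable section

/-- Generalized binomial coefficient `C(q, n)` for `q ∈ ℚ`. -/
def qchoose (q : ℚ) (n : ℕ) : ℚ :=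
  (∏ i ∈ Finset.range n, (q - i)) / (n.factorial : ℚ)

/-- A vertex algebra over ℂ: `Y u n v = uₙv`, with vacuum `vac = 𝟙`, the
truncation, vacuum and creation properties, and the Borcherds (Jacobi)
identity in component form. -/
structure VertexAlgebra (V : Type*) [AddCommGroup V] [Module ℂ V] where
  Y : V →ₗ[ℂ] ℤ → V →ₗ[ℂ] V
  vac : V
  trunc : ∀ u v, ∃ N : ℤ, ∀ n ≥ N, Y u n v = 0
  vac_act : ∀ v : V, Y vac (-1) v = v
  vac_act' : ∀ (v : V) (n : ℤ), n ≠ -1 → Y vac n v = 0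
  creation : ∀ u : V, Y u (-1) vac = u
  creation' : ∀ (u : V) (n : ℤ), 0 ≤ n → Y u n vac = 0
  borcherds : ∀ (u v w : V) (p q r : ℤ),
    ∑ᶠ i : ℕ, ((qchoose (p : ℚ) i : ℚ) : ℂ) • Y (Y u (r + i) v) (p + q - i) w
      = ∑ᶠ i : ℕ, ((-1 : ℂ) ^ i * ((qchoose (r : ℚ) i : ℚ) : ℂ)) •
          (Y u (p + r - i) (Y v (q + i) w)
            - ((-1 : ℂ) ^ r) • Y v (q + r - i) (Y u (p + i) w))

/-- A vertex `A`-algebroid: `act a v = a*v`, `br` the Leibniz bracket,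
`pi b a = π(b)(a)` the anchor, `pr u v = ⟨u,v⟩` the pairing, `d = ∂`. -/
structure VertexAlgebroid (A B : Type*) [CommRing A] [Algebra ℂ A]
    [AddCommGroup B] [Module ℂ B] where
  act : A →ₗ[ℂ] B →ₗ[ℂ] B
  act_one : ∀ v, act 1 v = v
  br : B →ₗ[ℂ] B →ₗ[ℂ] B
  leibniz : ∀ u v w, br u (br v w) = br (br u v) w + br v (br u w)
  pi : B →ₗ[ℂ] A →ₗ[ℂ] A
  pi_der : ∀ v a a', pi v (a * a') = a * pi v a' + (pi v a) * a'
  pi_hom : ∀ u v a, pi (br u v) a = pi u (pi v a) - pi v (pi u a)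
  pr : B →ₗ[ℂ] B →ₗ[ℂ] A
  pr_symm : ∀ u v, pr u v = pr v u
  d : A →ₗ[ℂ] B
  pi_d : ∀ a a', pi (d a) a' = 0
  id1 : ∀ a a' v, act a (act a' v) - act (a * a') v
          = act (pi v a) (d a') + act (pi v a') (d a)
  id2 : ∀ u a v, br u (act a v) = act (pi u a) v + act a (br u v)
  id3 : ∀ u v, br u v + br v u = d (pr u v)
  id4 : ∀ a v a', pi (act a v) a' = a * pi v a'
  id5 : ∀ a u v, pr (act a u) v = a * pr u v - pi u (pi v a)
  id6 : ∀ v v1 v2, pi v (pr v1 v2) = pr (br v v1) v2 + pr v1 (br v v2)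
  id7 : ∀ a a', d (a * a') = act a (d a') + act a' (d a)
  id8 : ∀ v a, br v (d a) = d (pi v a)
  id9 : ∀ v a, pr v (d a) = pi v a

/-- The data of the ℕ-graded vertex algebra `V_B` associated with a vertex
`A`-algebroid `B` (Gorbounov–Malikov–Schechtman): a vertex algebra `V` with
an internal ℕ-grading, with `(V_B)₍₀₎ = A`, `(V_B)₍₁₎ = B` (via the
embeddings `iA`, `iB`), vacuum equal to the identity `e` of `A`, the
structural identities `a₋₁a' = aa'`, `a₋₁b = ab`, `b₀b' = [b,b']`,
`b₁b' = ⟨b,b'⟩`, `b₀a = π(b)a`, `a₋₂𝟙 = ∂a`, and generated by `A ⊕ B`. -/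
structure GMSData (A B V : Type*) [CommRing A] [Algebra ℂ A]
    [AddCommGroup B] [Module ℂ B] [AddCommGroup V] [Module ℂ V]
    (Vb : VertexAlgebroid A B) where
  VA : VertexAlgebra V
  iA : A →ₗ[ℂ] V
  iB : B →ₗ[ℂ] V
  injA : Function.Injective iA
  injB : Function.Injective iB
  grade : ℕ → Submodule ℂ V
  internal : DirectSum.IsInternal grade
  grade0 : grade 0 = LinearMap.range iA
  grade1 : grade 1 = LinearMap.range iB
  grade_Y : ∀ (p q : ℕ) (u : V), u ∈ grade p → ∀ (n : ℤ), ∀ w ∈ grade q,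
      (((p : ℤ) + q - n - 1 < 0) → VA.Y u n w = 0) ∧
      (∀ m : ℕ, (m : ℤ) = (p : ℤ) + q - n - 1 → VA.Y u n w ∈ grade m)
  vac_eq : VA.vac = iA 1
  hAA : ∀ a a', VA.Y (iA a) (-1) (iA a') = iA (a * a')
  hAB : ∀ a b, VA.Y (iA a) (-1) (iB b) = iB (Vb.act a b)
  hBB0 : ∀ b b', VA.Y (iB b) 0 (iB b') = iB (Vb.br b b')
  hBB1 : ∀ b b', VA.Y (iB b) 1 (iB b') = iA (Vb.pr b b')
  hBA : ∀ b a, VA.Y (iB b) 0 (iA a) = iA (Vb.pi b a)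
  hD : ∀ a, VA.Y (iA a) (-2) VA.vac = iB (Vb.d a)
  generates : ∀ Wd : Submodule ℂ V, VA.vac ∈ Wd →
      (∀ u : V, (u ∈ LinearMap.range iA ∨ u ∈ LinearMap.range iB) →
        ∀ n : ℤ, ∀ w ∈ Wd, VA.Y u n w ∈ Wd) → Wd = ⊤

/-- An automorphism of a vertex `A`-algebroid `B`: a pair of an algebra
automorphism of `A` and a linear automorphism of `B` preserving all the
structure maps. -/
structure VAAut {A B : Type*} [CommRing A] [Algebra ℂ A]
    [AddCommGroup B] [Module ℂ B] (V : VertexAlgebroid A B) where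
  gA : A ≃ₐ[ℂ] A
  gB : B ≃ₗ[ℂ] B
  map_act : ∀ a v, gB (V.act a v) = V.act (gA a) (gB v)
  map_br : ∀ u v, gB (V.br u v) = V.br (gB u) (gB v)
  map_pr : ∀ u v, V.pr (gB u) (gB v) = gA (V.pr u v)
  map_d : ∀ a, gB (V.d a) = V.d (gA a)
  map_pi : ∀ b a, gA (V.pi b a) = V.pi (gB b) (gA a)

/-- A `g`-twisted module for a vertex algebra `V` with automorphism `g` of
order `T`. The operator `act v k` represents `v_{k/T}` (indices are in units
of `1/T`). -/
structure TwistedModule {V : Type*} [AddCommGroup V] [Module ℂ V]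
    (VA : VertexAlgebra V) (T : ℕ) (g : V ≃ₗ[ℂ] V)
    (W : Type*) [AddCommGroup W] [Module ℂ W] where
  act : V →ₗ[ℂ] ℤ → W →ₗ[ℂ] W
  trunc : ∀ (v : V) (w : W), ∃ N : ℤ, ∀ k ≥ N, act v k w = 0
  vac_act : ∀ w : W, act VA.vac (-(T : ℤ)) w = w
  vac_act' : ∀ (w : W) (k : ℤ), k ≠ -(T : ℤ) → act VA.vac k w = 0
  eigen : ∀ (u : V) (r : ℕ), r < T →
    g u = Complex.exp (2 * Real.pi * Complex.I * r / T) • u →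
    ∀ k : ℤ, ¬ (k ≡ (r : ℤ) [ZMOD (T : ℤ)]) → act u k = 0
  jacobi : ∀ (u : V) (r : ℕ), r < T →
    g u = Complex.exp (2 * Real.pi * Complex.I * r / T) • u →
    ∀ (v : V) (p s t : ℤ), s ≡ (r : ℤ) [ZMOD (T : ℤ)] → ∀ w : W,
    ∑ᶠ m : ℕ, ((qchoose ((s : ℚ) / T) m : ℚ) : ℂ) •
        act (VA.Y u (p + m) v) (s + t - m * T) w
      = ∑ᶠ m : ℕ, ((-1 : ℂ) ^ m * ((qchoose (p : ℚ) m : ℚ) : ℂ)) •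
          (act u (p * T + s - m * T) (act v (t + m * T) w)
            - ((-1 : ℂ) ^ p) • act v (p * T + t - m * T) (act u (s + m * T) w))

lemma qchoose_zero (q : ℚ) : qchoose q 0 = 1 := by simp [qchoose]

lemma qchoose_zero_left (m : ℕ) (hm : m ≠ 0) : qchoose 0 m = 0 := by
  unfold qchoose
  rw [Finset.prod_eq_zero (Finset.mem_range.2 (Nat.pos_of_ne_zero hm))
    (by norm_num), zero_div]

/-- Proposition 3.13: for a `(1/T)ℕ`-graded `g`-twisted
`V_B`-module `M = ⊕_{n ∈ (1/T)ℕ} M(n)` (the piece `grM k` has degree `k/T`),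
the degree-zero subspace `M(0)` is a module for the Lie `A⁰`-algebroid
`B⁰/A⁰∂A⁰` via `a·w = a₋₁w` and `b·w = b₀w`, where `A⁰`, `B⁰` are the
`g`-fixed points. (In units of `1/T`: `a₋₁w = act (iA a) (-T) w` and
`b₀w = act (iB b) 0 w`.) -/
theorem stmt14 {A B V W : Type*} [CommRing A] [Algebra ℂ A]
    [AddCommGroup B] [Module ℂ B] [AddCommGroup V] [Module ℂ V]
    [AddCommGroup W] [Module ℂ W]
    (Vb : VertexAlgebroid A B) (D : GMSData A B V Vb)
    (g : VAAut Vb) (T : ℕ) (hT : 0 < T)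
    (hordA : ∀ a, (fun x => g.gA x)^[T] a = a)
    (hordB : ∀ b, (fun x => g.gB x)^[T] b = b)
    (G : V ≃ₗ[ℂ] V) (hvac : G D.VA.vac = D.VA.vac)
    (hY : ∀ (u : V) (n : ℤ) (v : V), G (D.VA.Y u n v) = D.VA.Y (G u) n (G v))
    (hGA : ∀ a, G (D.iA a) = D.iA (g.gA a))
    (hGB : ∀ b, G (D.iB b) = D.iB (g.gB b))
    (M : TwistedModule D.VA T G W)
    (grM : ℕ → Submodule ℂ W) (hint : DirectSum.IsInternal grM)
    (hgrM : ∀ (p : ℕ) (u : V), u ∈ D.grade p → ∀ (k : ℤ) (q : ℕ), ∀ w ∈ grM q,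
      (((q : ℤ) + p * T - k - T < 0) → M.act u k w = 0) ∧
      (∀ m : ℕ, (m : ℤ) = (q : ℤ) + p * T - k - T → M.act u k w ∈ grM m)) :
    ∀ w ∈ grM 0,
      (∀ a : A, g.gA a = a → M.act (D.iA a) (-(T : ℤ)) w ∈ grM 0) ∧
      (∀ b : B, g.gB b = b → M.act (D.iB b) 0 w ∈ grM 0) ∧
      (M.act (D.iA 1) (-(T : ℤ)) w = w) ∧
      (∀ a a' : A, g.gA a = a → g.gA a' = a' →
        M.act (D.iA (a * a')) (-(T : ℤ)) w
          = M.act (D.iA a) (-(T : ℤ)) (M.act (D.iA a') (-(T : ℤ)) w)) ∧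
      (∀ b b' : B, g.gB b = b → g.gB b' = b' →
        M.act (D.iB (Vb.br b b')) 0 w
          = M.act (D.iB b) 0 (M.act (D.iB b') 0 w)
            - M.act (D.iB b') 0 (M.act (D.iB b) 0 w)) ∧
      (∀ (b : B) (a : A), g.gB b = b → g.gA a = a →
        M.act (D.iB b) 0 (M.act (D.iA a) (-(T : ℤ)) w)
            - M.act (D.iA a) (-(T : ℤ)) (M.act (D.iB b) 0 w)
          = M.act (D.iA (Vb.pi b a)) (-(T : ℤ)) w) ∧
      (∀ (a : A) (b : B), g.gA a = a → g.gB b = b →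
        M.act (D.iA a) (-(T : ℤ)) (M.act (D.iB b) 0 w)
          = M.act (D.iB (Vb.act a b)) 0 w) ∧
      (∀ a a' : A, g.gA a = a → g.gA a' = a' →
        M.act (D.iB (Vb.act a (Vb.d a'))) 0 w = 0) := by
  intro w hw
  have hT' : (0:ℤ) < (T:ℤ) := by exact_mod_cast hT
  have memA : ∀ x : A, D.iA x ∈ D.grade 0 := fun x => by rw [D.grade0]; exact ⟨x, rfl⟩
  have memB : ∀ x : B, D.iB x ∈ D.grade 1 := fun x => by rw [D.grade1]; exact ⟨x, rfl⟩
  have vA : ∀ (x : A) (k : ℤ), -(T:ℤ) < k → M.act (D.iA x) k w = 0 := fun x k hk =>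
    (hgrM 0 (D.iA x) (memA x) k 0 w hw).1 (by push_cast; linarith)
  have vB : ∀ (x : B) (k : ℤ), 0 < k → M.act (D.iB x) k w = 0 := fun x k hk =>
    (hgrM 1 (D.iB x) (memB x) k 0 w hw).1 (by push_cast; linarith)
  have hmod : (0:ℤ) ≡ (((0:ℕ)):ℤ) [ZMOD (T:ℤ)] := by simp [Int.ModEq]
  -- the derivation lemma: (∂a)₀ kills everything
  have hdzero : ∀ (x : A), g.gA x = x → ∀ w' : W, M.act (D.iB (Vb.d x)) 0 w' = 0 := by
    intro x hx w'
    have key := M.jacobi (D.iA x) 0 hT (by simp [hGA, hx]) D.VA.vac (-2) 0 0 hmod w'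
    refine Eq.trans ?_ (key.trans ?_)
    · refine ((finsum_eq_single _ 0 ?_).trans ?_).symm
      · intro m hm; simp [qchoose_zero_left m hm]
      · simp [qchoose_zero, D.hD]
    · refine finsum_eq_zero_of_forall_eq_zero ?_
      intro m
      have hmn : (0:ℤ) ≤ (m:ℤ) * (T:ℤ) :=
        mul_nonneg (Int.natCast_nonneg m) (Int.natCast_nonneg T)
      have h1 : M.act D.VA.vac ((m:ℤ) * (T:ℤ)) w' = 0 :=
        M.vac_act' w' _ (by intro h; linarith)
      have h2 : ∀ y : W,
          M.act D.VA.vac (-(2 * (T:ℤ)) - (m:ℤ) * (T:ℤ)) y = 0 := fun y =>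
        M.vac_act' y _ (by intro h; linarith)
      simp [h1, h2]
  -- case 7 as a lemma (used twice)
  have main7 : ∀ (x : A) (y : B), g.gA x = x → g.gB y = y →
      M.act (D.iA x) (-(T:ℤ)) (M.act (D.iB y) 0 w)
        = M.act (D.iB (Vb.act x y)) 0 w := by
    intro x y hx hy
    have key := M.jacobi (D.iA x) 0 hT (by simp [hGA, hx]) (D.iB y) (-1) 0 0 hmod w
    refine Eq.trans ?_ (key.symm.trans ?_)
    · refine ((finsum_eq_single _ 0 ?_).trans ?_).symm
      · intro m hm
        have hmpos : (0:ℤ) < (m:ℤ) * (T:ℤ) :=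
          mul_pos (by exact_mod_cast Nat.pos_of_ne_zero hm) hT'
        have h1 : M.act (D.iB y) ((m:ℤ) * (T:ℤ)) w = 0 := vB y _ (by linarith)
        have h2 : M.act (D.iA x) ((m:ℤ) * (T:ℤ)) w = 0 := vA x _ (by linarith)
        simp [h1, h2]
      · have h0 : M.act (D.iA x) 0 w = 0 := vA x 0 (by linarith)
        simp [qchoose_zero, h0]
    · refine (finsum_eq_single _ 0 ?_).trans ?_
      · intro m hm; simp [qchoose_zero_left m hm]
      · simp [qchoose_zero, D.hAB]
  refine ⟨?_, ?_, ?_, ?_, ?_, ?_, main7, ?_⟩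
  · -- a₋₁ preserves M(0)
    intro a _
    exact (hgrM 0 (D.iA a) (memA a) (-(T:ℤ)) 0 w hw).2 0 (by push_cast; ring)
  · -- b₀ preserves M(0)
    intro b _
    exact (hgrM 1 (D.iB b) (memB b) 0 0 w hw).2 0 (by push_cast; ring)
  · -- unit acts as identity
    rw [← D.vac_eq]; exact M.vac_act w
  · -- associativity for A⁰
    intro a a' ha ha'
    have key := M.jacobi (D.iA a) 0 hT (by simp [hGA, ha]) (D.iA a') (-1) 0 (-(T:ℤ))
      hmod w
    refine Eq.trans ?_ (key.trans ?_)
    · refine ((finsum_eq_single _ 0 ?_).trans ?_).symm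
      · intro m hm; simp [qchoose_zero_left m hm]
      · simp [qchoose_zero, D.hAA]
    · refine (finsum_eq_single _ 0 ?_).trans ?_
      · intro m hm
        have hmpos : (0:ℤ) < (m:ℤ) * (T:ℤ) :=
          mul_pos (by exact_mod_cast Nat.pos_of_ne_zero hm) hT'
        have h1 : M.act (D.iA a') (-(T:ℤ) + (m:ℤ) * (T:ℤ)) w = 0 := vA a' _ (by linarith)
        have h2 : M.act (D.iA a) ((m:ℤ) * (T:ℤ)) w = 0 := vA a _ (by linarith)
        simp [h1, h2]
      · have h0 : M.act (D.iA a) 0 w = 0 := vA a 0 (by linarith)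
        simp [qchoose_zero, h0]
  · -- bracket acts as commutator
    intro b b' hb hb'
    have key := M.jacobi (D.iB b) 0 hT (by simp [hGB, hb]) (D.iB b') 0 0 0 hmod w
    refine Eq.trans ?_ (key.trans ?_)
    · refine ((finsum_eq_single _ 0 ?_).trans ?_).symm
      · intro m hm; simp [qchoose_zero_left m hm]
      · simp [qchoose_zero, D.hBB0]
    · refine (finsum_eq_single _ 0 ?_).trans ?_
      · intro m hm; simp [qchoose_zero_left m hm]
      · simp [qchoose_zero]
  · -- the anchor identity
    intro b a hb ha
    have key := M.jacobi (D.iB b) 0 hT (by simp [hGB, hb]) (D.iA a) 0 0 (-(T:ℤ)) hmod w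
    refine Eq.trans ?_ (key.symm.trans ?_)
    · refine ((finsum_eq_single _ 0 ?_).trans ?_).symm
      · intro m hm; simp [qchoose_zero_left m hm]
      · simp [qchoose_zero]
    · refine (finsum_eq_single _ 0 ?_).trans ?_
      · intro m hm; simp [qchoose_zero_left m hm]
      · simp [qchoose_zero, D.hBA]
  · -- a ∂a' acts as zero
    intro a a' ha ha'
    have hdb : g.gB (Vb.d a') = Vb.d a' := by rw [g.map_d, ha']
    have h7 := main7 a (Vb.d a') ha hdb
    rw [← h7, hdzero a' ha' w, map_zero]
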